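/- arXiv:2405.03549 — 3 statements merged into one kernel-verified Lean document; each statement's English description precedes it below -/
import Mathlib

section
/- Let Ω be a finite set, p₀ : Ω → [0,∞) with Σ_{x₀∈Ω} p₀(x₀) = 1, and p : Ω × Ω → (0,∞), writing p(x|x₀) for the forward transition probability from x₀ to x. Define p_t(x) = Σ_{x₀∈Ω} p(x|x₀) p₀(x₀) and, for x with p_t(x) > 0, the reverse transition probability p_{0|t}(x₀|x) = p(x|x₀) p₀(x₀) / p_t(x). Fix x, y ∈ Ω with p_t(x) > 0 and let r(x|y) ∈ ℝ be a given forward rate. If r̄(y|x) ∈ ℝ satisfies the time-reversal relation r̄(y|x) · p_t(x) = r(x|y) · p_t(y), then r̄(y|x) = ( Σ_{x₀∈Ω} [ p(y|x₀) / p(x|x₀) ] · p_{0|t}(x₀|x) ) · r(x|y), i.e. the backward rate equals the conditional expectation of the transition-probability ratio under p_{0|t}(·|x) times the forward rate with switched arguments. -/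
/-- Lemma 3.1 (backward rates of the time-reversed Markov jump process):
if `r̄(y|x) p_t(x) = r(x|y) p_t(y)`, then the backward rate equals the conditional
expectation of the transition-probability ratio under the reverse transition
probability `p_{0|t}(·|x)` times the forward rate with switched arguments. -/
theorem backward_rate_eq_condExp_mul_forward_rate
    {Ω : Type*} [Fintype Ω]
    (p₀ : Ω → ℝ) (hp₀ : ∀ x₀, 0 ≤ p₀ x₀) (hp₀sum : ∑ x₀, p₀ x₀ = 1)
    (p : Ω → Ω → ℝ) (hp : ∀ x x₀, 0 < p x x₀)
    (pt : Ω → ℝ) (hpt : ∀ x, pt x = ∑ x₀, p x x₀ * p₀ x₀)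
    (x y : Ω) (hptx : 0 < pt x)
    (r rbar : ℝ)
    (hrev : rbar * pt x = r * pt y) :
    rbar = (∑ x₀, (p y x₀ / p x x₀) * (p x x₀ * p₀ x₀ / pt x)) * r := by
  have hsum : (∑ x₀, (p y x₀ / p x x₀) * (p x x₀ * p₀ x₀ / pt x)) = pt y / pt x := by
    have : ∀ x₀, (p y x₀ / p x x₀) * (p x x₀ * p₀ x₀ / pt x)
        = p y x₀ * p₀ x₀ / pt x := by
      intro x₀
      have h := (hp x x₀).ne'
      field_simp
    rw [Finset.sum_congr rfl fun x₀ _ => this x₀, ← Finset.sum_div, ← hpt]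
  rw [hsum]
  field_simp
  linarith [hrev]
end

section
/- Let S ∈ ℕ with S ≥ 1, δ = 2/√S, and x ∈ ℝ. Let Ω be a finite set, w : Ω → [0,∞) with Σ_{x₀∈Ω} w(x₀) = 1 (playing the role of the reverse transition probability p_{0|t}(·|x)), and let p(x−δ|x₀), p(x|x₀), p(x+δ|x₀) be strictly positive reals for each x₀ ∈ Ω (playing the role of forward transition probabilities). Define the averaged forward and backward difference quotients E⁺ = Σ_{x₀} w(x₀) (p(x+δ|x₀) − p(x|x₀)) / (δ p(x|x₀)) and E⁻ = Σ_{x₀} w(x₀) (p(x|x₀) − p(x−δ|x₀)) / (δ p(x|x₀)), and define the reverse rates r̄⁺ = ( Σ_{x₀} w(x₀) p(x+δ|x₀)/p(x|x₀) ) · ((√S/4)(√S + x) + 1/2) and r̄⁻ = ( Σ_{x₀} w(x₀) p(x−δ|x₀)/p(x|x₀) ) · ((√S/4)(√S − x) + 1/2). Then the first jump moment of the time-reversed process satisfies the exact identity δ r̄⁺ − δ r̄⁻ = x + (1 + x/√S + 2/S) E⁺ + (1 − x/√S + 2/S) E⁻. In particular, with b(x) = −x and D(x) = 2, it equals −b(x)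 + D(x)·(E⁺ + E⁻)/2 + R with remainder R = (x/√S + 2/S) E⁺ + (−x/√S + 2/S) E⁻, making precise the o(S^{−1/2}) claim of Proposition 4.3 for the first jump moment whenever E⁺ and E⁻ are bounded. -/
/-- Exact algebraic form of the first jump moment of the time-reversed scaled Ehrenfest
process (Proposition 4.3, first moment). With `δ = 2/√S`, weights `w` (the reverse
transition probability), positive forward transition probabilities `pm, p0, pp` at
`x − δ, x, x + δ`, averaged difference quotients `E⁺, E⁻` and reverse rates `r̄⁺, r̄⁻`,
we have `δ r̄⁺ − δ r̄⁻ = x + (1 + x/√S + 2/S) E⁺ + (1 − x/√S + 2/S) E⁻`. -/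
theorem reversed_first_jump_moment_exact
    {Ω : Type*} [Fintype Ω]
    (S : ℕ) (hS : 1 ≤ S) (x : ℝ)
    (δ : ℝ) (hδ : δ = 2 / Real.sqrt S)
    (w : Ω → ℝ) (hw : ∀ x₀, 0 ≤ w x₀) (hwsum : ∑ x₀, w x₀ = 1)
    (pm p0 pp : Ω → ℝ)
    (hpm : ∀ x₀, 0 < pm x₀) (hp0 : ∀ x₀, 0 < p0 x₀) (hpp : ∀ x₀, 0 < pp x₀)
    (Ep Em : ℝ)
    (hEp : Ep = ∑ x₀, w x₀ * ((pp x₀ - p0 x₀) / (δ * p0 x₀)))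
    (hEm : Em = ∑ x₀, w x₀ * ((p0 x₀ - pm x₀) / (δ * p0 x₀)))
    (rp rm : ℝ)
    (hrp : rp = (∑ x₀, w x₀ * (pp x₀ / p0 x₀)) * (Real.sqrt S / 4 * (Real.sqrt S + x) + 1 / 2))
    (hrm : rm = (∑ x₀, w x₀ * (pm x₀ / p0 x₀)) * (Real.sqrt S / 4 * (Real.sqrt S - x) + 1 / 2)) :
    δ * rp - δ * rm
      = x + (1 + x / Real.sqrt S + 2 / S) * Ep + (1 - x / Real.sqrt S + 2 / S) * Em := by
  have hs : (0:ℝ) < Real.sqrt S := Real.sqrt_pos.mpr (by exact_mod_cast Nat.lt_of_lt_of_le Nat.zero_lt_one hS)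
  have hss : Real.sqrt S * Real.sqrt S = (S:ℝ) := Real.mul_self_sqrt (by positivity)
  have hδ0 : δ ≠ 0 := by rw [hδ]; positivity
  set A := ∑ x₀, w x₀ * (pp x₀ / p0 x₀) with hA
  set B := ∑ x₀, w x₀ * (pm x₀ / p0 x₀) with hB
  have hEpA : Ep = (A - 1) / δ := by
    rw [hEp, hA, ← hwsum, ← Finset.sum_sub_distrib, Finset.sum_div]
    refine Finset.sum_congr rfl fun x₀ _ => ?_
    have h0 := (hp0 x₀).ne'
    field_simp
  have hEmB : Em = (1 - B) / δ := by
    rw [hEm, hB, ← hwsum, ← Finset.sum_sub_distrib, Finset.sum_div]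
    refine Finset.sum_congr rfl fun x₀ _ => ?_
    have h0 := (hp0 x₀).ne'
    field_simp
  have hs0 : Real.sqrt S ≠ 0 := hs.ne'
  have hS0 : (S:ℝ) ≠ 0 := by positivity
  rw [hrp, hrm, hEpA, hEmB, hδ]
  field_simp
  linear_combination (8 * (B - A)) * hss
end

section
/- Let S ∈ ℕ with S ≥ 1, δ = 2/√S, and x ∈ ℝ. Let Ω be a finite set, w : Ω → [0,∞) with Σ_{x₀∈Ω} w(x₀) = 1, and let p(x−δ|x₀), p(x|x₀), p(x+δ|x₀) be strictly positive reals for each x₀ ∈ Ω. Define E⁺ = Σ_{x₀} w(x₀) (p(x+δ|x₀) − p(x|x₀)) / (δ p(x|x₀)) and E⁻ = Σ_{x₀} w(x₀) (p(x|x₀) − p(x−δ|x₀)) / (δ p(x|x₀)), and the reverse rates r̄⁺ = ( Σ_{x₀} w(x₀) p(x+δ|x₀)/p(x|x₀) ) · ((√S/4)(√S + x) + 1/2) and r̄⁻ = ( Σ_{x₀} w(x₀) p(x−δ|x₀)/p(x|x₀) ) · ((√S/4)(√S − x) + 1/2). Then the second jump moment of the time-reversed process satisfies the exact identity δ² r̄⁺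 + δ² r̄⁻ = 2 + 4/S + δ·[ (1 + x/√S + 2/S) E⁺ − (1 − x/√S + 2/S) E⁻ ]. In particular, it equals D(x) = 2 up to a term of size O(1/√S) whenever E⁺ and E⁻ are bounded and |x| ≤ √S, making precise the o(S^{−1/2}) claim of Proposition 4.3 for the second jump moment. -/
/-- Exact algebraic form of the second jump moment of the time-reversed scaled Ehrenfest
process (Proposition 4.3, second moment). With `δ = 2/√S`, weights `w`, positive forward
transition probabilities `pm, p0, pp` at `x − δ, x, x + δ`, averaged difference quotients
`E⁺, E⁻` and reverse rates `r̄⁺, r̄⁻`, we have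
`δ² r̄⁺ + δ² r̄⁻ = 2 + 4/S + δ·[(1 + x/√S + 2/S) E⁺ − (1 − x/√S + 2/S) E⁻]`. -/
theorem reversed_second_jump_moment_exact
    {Ω : Type*} [Fintype Ω]
    (S : ℕ) (hS : 1 ≤ S) (x : ℝ)
    (δ : ℝ) (hδ : δ = 2 / Real.sqrt S)
    (w : Ω → ℝ) (hw : ∀ x₀, 0 ≤ w x₀) (hwsum : ∑ x₀, w x₀ = 1)
    (pm p0 pp : Ω → ℝ)
    (hpm : ∀ x₀, 0 < pm x₀) (hp0 : ∀ x₀, 0 < p0 x₀) (hpp : ∀ x₀, 0 < pp x₀)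
    (Ep Em : ℝ)
    (hEp : Ep = ∑ x₀, w x₀ * ((pp x₀ - p0 x₀) / (δ * p0 x₀)))
    (hEm : Em = ∑ x₀, w x₀ * ((p0 x₀ - pm x₀) / (δ * p0 x₀)))
    (rp rm : ℝ)
    (hrp : rp = (∑ x₀, w x₀ * (pp x₀ / p0 x₀)) * (Real.sqrt S / 4 * (Real.sqrt S + x) + 1 / 2))
    (hrm : rm = (∑ x₀, w x₀ * (pm x₀ / p0 x₀)) * (Real.sqrt S / 4 * (Real.sqrt S - x) + 1 / 2)) :
    δ ^ 2 * rp + δ ^ 2 * rm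
      = 2 + 4 / S
        + δ * ((1 + x / Real.sqrt S + 2 / S) * Ep - (1 - x / Real.sqrt S + 2 / S) * Em) := by
  have hSpos : (0:ℝ) < S := by exact_mod_cast Nat.lt_of_lt_of_le Nat.zero_lt_one hS
  set s := Real.sqrt S with hs_def
  have hs : 0 < s := Real.sqrt_pos.2 hSpos
  have hs2 : s ^ 2 = S := Real.sq_sqrt hSpos.le
  have hδ0 : δ ≠ 0 := by rw [hδ]; positivity
  have hA : (∑ x₀, w x₀ * (pp x₀ / p0 x₀)) = δ * Ep + 1 := by
    rw [hEp, Finset.mul_sum, ← hwsum, ← Finset.sum_add_distrib]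
    refine Finset.sum_congr rfl fun x₀ _ => ?_
    have h0 := (hp0 x₀).ne'
    field_simp
    ring
  have hB : (∑ x₀, w x₀ * (pm x₀ / p0 x₀)) = 1 - δ * Em := by
    rw [hEm, Finset.mul_sum, ← hwsum, ← Finset.sum_sub_distrib]
    refine Finset.sum_congr rfl fun x₀ _ => ?_
    have h0 := (hp0 x₀).ne'
    field_simp
    ring
  rw [hrp, hrm, hA, hB, hδ, ← hs2]
  field_simp
  ring
end
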